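/- Let k be a field, let Σ be an S-graph all of whose vertices are internal, and let n be a positive integer compatible with Σ. Fix for each edge f of Σ one of its two halfedges i_f. Then the images in A(Σ,n) of the following paths form a k-basis of A(Σ,n): (1) the idempotent e_f at the quiver vertex corresponding to each edge f; (2) for each vertex v of Σ, each ordered pair (i,j) of halfedges at v, and each integer r with 0 ≤ r < n/deg(v) and (i,j,r) not of the form (i,i,0), the path a^r_{i,j} := a_{i−1} ⋯ a_{j+1} a_j (a_{j−1} ⋯ a_{j+1} a_j)^r, which is homogeneous of degree d(j,i) + r·deg(v); (3) the cycle c_{i_f} of degree n, one for each edge f. In particular, A(Σ,n) is finite-dimensional of dimension dim_k A(Σ,n) = Σ_{v ∈ V} val(v)² · n/deg(v), where val(v) is the number of halfedges at v. -/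

import Mathlib

/-- An S-graph all of whose vertices are internal: a finite set of halfedges with a
fixed-point-free involution `τ` (whose orbits are the edges), a vertex map `vtx`, a cyclic
order on the halfedges at each vertex (encoded by the cyclic successor map `succ`), and a
positive integer `d i = d(i, i+1)` for every halfedge `i`. -/
structure SGraph where
  /-- the type of halfedges -/
  H : Type
  fintypeH : Fintype H
  decEqH : DecidableEq H
  /-- the type of vertices -/
  V : Type
  fintypeV : Fintype V
  decEqV : DecidableEq V
  /-- the edge involution -/
  τ : H → H
  τ_invol : ∀ i, τ (τ i) = i
  τ_ne : ∀ i, τ i ≠ i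
  /-- the vertex to which a halfedge is attached -/
  vtx : H → V
  /-- the cyclic successor `i ↦ i + 1` among the halfedges at a common vertex -/
  succ : H → H
  vtx_succ : ∀ i, vtx (succ i) = vtx i
  cyclic : ∀ i j, vtx i = vtx j → ∃ m, succ^[m] i = j
  /-- `d i = d(i, i+1)` -/
  d : H → ℕ
  d_pos : ∀ i, 0 < d i

attribute [instance] SGraph.fintypeH SGraph.decEqH SGraph.fintypeV SGraph.decEqV

namespace SGraph

variable (Sg : SGraph)

/-- The halfedges attached to a given vertex. -/
def halfedgesAt (v : Sg.V) : Finset Sg.H := Finset.univ.filter fun i => Sg.vtx i = v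

/-- The degree of a vertex: the sum of `d(i, i+1)` over the halfedges at it. -/
def deg (v : Sg.V) : ℕ := ∑ i ∈ Sg.halfedgesAt v, Sg.d i

/-- The valency of a vertex: the number of halfedges at it. -/
def val (v : Sg.V) : ℕ := (Sg.halfedgesAt v).card

/-- The number of `succ`-steps from the halfedge `j` to the halfedge `i`
(`0` by convention if `i` is not on the `succ`-orbit of `j`). -/
noncomputable def distTo (j i : Sg.H) : ℕ := by
  classical
  exact if h : ∃ m, Sg.succ^[m] j = i then Nat.find h else 0

/-- `d(j, i)` for halfedges `j`, `i` at a common vertex: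
`d(j,i) = d(j,j+1) + d(j+1,j+2) + ⋯ + d(i−1,i)` (so `d(j,j) = 0`). -/
noncomputable def dTo (j i : Sg.H) : ℕ :=
  ∑ m ∈ Finset.range (Sg.distTo j i), Sg.d (Sg.succ^[m] j)

/-- The setoid identifying a halfedge with its partner under `τ`; its quotient is the set
of edges. -/
def edgeSetoid : Setoid Sg.H where
  r i j := j = i ∨ j = Sg.τ i
  iseqv := by
    refine ⟨fun i => Or.inl rfl, ?_, ?_⟩
    · rintro i j (rfl | rfl)
      · exact Or.inl rfl
      · exact Or.inr (Sg.τ_invol i).symm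
    · rintro i j k (rfl | rfl) h
      · exact h
      · rcases h with rfl | rfl
        · exact Or.inr rfl
        · exact Or.inl (Sg.τ_invol i)

/-- The edges of the S-graph: `τ`-orbits of halfedges. -/
def Edge : Type := Quotient Sg.edgeSetoid

noncomputable instance : Fintype Sg.Edge := by
  classical
  have : Finite Sg.Edge :=
    Finite.of_surjective (Quotient.mk Sg.edgeSetoid) fun q => Quot.exists_rep q
  exact Fintype.ofFinite _

/-- The edge containing a halfedge. -/
def edgeOf (i : Sg.H) : Sg.Edge := Quotient.mk Sg.edgeSetoid i

/-- An orientation of an S-graph compatible with the grading data: a map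
`ε : H → ℤ/2` with `ε(τ i) ≠ ε(i)` and `d(i,i+1) ≡ ε(i) + ε(i+1) (mod 2)` for all `i`. -/
def Orientable : Prop :=
  ∃ ε : Sg.H → ZMod 2, (∀ i, ε (Sg.τ i) ≠ ε i) ∧
    ∀ i, (Sg.d i : ZMod 2) = ε i + ε (Sg.succ i)

end SGraph

namespace SGraph

/-- The free `k`-algebra on the generators of the quiver presenting the graded Brauer
graph algebra: one idempotent generator for each edge (quiver vertex) and one arrow
generator `a_i` for each halfedge `i`. -/
abbrev FA (k : Type) [Field k] (Sg : SGraph) : Type := FreeAlgebra k (Sg.Edge ⊕ Sg.H)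

/-- The idempotent generator `e_f` at the quiver vertex given by the edge `f`. -/
noncomputable def gE (k : Type) [Field k] (Sg : SGraph) (f : Sg.Edge) : FA k Sg :=
  FreeAlgebra.ι k (Sum.inl f)

/-- The arrow generator `a_i` for the halfedge `i`, of degree `d(i, i+1)`. -/
noncomputable def gA (k : Type) [Field k] (Sg : SGraph) (i : Sg.H) : FA k Sg :=
  FreeAlgebra.ι k (Sum.inr i)

/-- The cycle `s_i = a_{i-1} ⋯ a_{i+1} a_i` going once around the vertex of `i`,
starting and ending at the edge of `i`. -/
noncomputable def loopOnce (k : Type) [Field k] (Sg : SGraph) (i : Sg.H) : FA k Sg :=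
  ((List.range (Sg.val (Sg.vtx i))).reverse.map fun m => gA k Sg (Sg.succ^[m] i)).prod

/-- The cycle `c_i = (a_{i-1} ⋯ a_{i+1} a_i)^{n / deg v}` based at the edge of `i`,
going `n / deg v` times around the vertex `v` of `i`. -/
noncomputable def cyc (k : Type) [Field k] (Sg : SGraph) (n : ℕ) (i : Sg.H) : FA k Sg :=
  loopOnce k Sg i ^ (n / Sg.deg (Sg.vtx i))

/-- The path `a^r_{i,j} = a_{i-1} ⋯ a_{j+1} a_j (a_{j-1} ⋯ a_{j+1} a_j)^r` from the
edge of `j` to the edge of `i` around their common vertex. -/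
noncomputable def pathElem (k : Type) [Field k] (Sg : SGraph) (j i : Sg.H) (r : ℕ) :
    FA k Sg :=
  ((List.range (Sg.distTo j i)).reverse.map fun m => gA k Sg (Sg.succ^[m] j)).prod *
    loopOnce k Sg j ^ r

/-- The defining relations of the graded Brauer graph algebra `A(Σ,n)`, presented as a
quotient of a free algebra: the quiver-vertex idempotent relations
(`e_f e_g = δ_{fg} e_f`, `∑ e_f = 1`, source/target relations for the arrows), the
monomial relations (i) `a_j a_i = 0` whenever `i+1` and `j` lie on the same edge but
`i+1 ≠ j`, and the cycle relations (ii) `c_i = (−1)^{n−1} c_{τ i}`. -/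
inductive Rel (k : Type) [Field k] (Sg : SGraph) (n : ℕ) : FA k Sg → FA k Sg → Prop
  | orth (f g : Sg.Edge) : f ≠ g → Rel k Sg n (gE k Sg f * gE k Sg g) 0
  | idem (f : Sg.Edge) : Rel k Sg n (gE k Sg f * gE k Sg f) (gE k Sg f)
  | sum_one : Rel k Sg n (∑ f : Sg.Edge, gE k Sg f) 1
  | target (i : Sg.H) :
      Rel k Sg n (gE k Sg (Sg.edgeOf (Sg.succ i)) * gA k Sg i) (gA k Sg i)
  | source (i : Sg.H) :
      Rel k Sg n (gA k Sg i * gE k Sg (Sg.edgeOf i)) (gA k Sg i)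
  | comp_zero (i j : Sg.H) : Sg.edgeOf (Sg.succ i) = Sg.edgeOf j → Sg.succ i ≠ j →
      Rel k Sg n (gA k Sg j * gA k Sg i) 0
  | cycle (i : Sg.H) :
      Rel k Sg n (cyc k Sg n i) (((-1 : k) ^ (n - 1)) • cyc k Sg n (Sg.τ i))

/-- The graded Brauer graph algebra `A(Σ,n)` of an S-graph with only internal vertices:
the quotient of the free algebra on the presenting quiver by the defining relations. -/
abbrev BGA (k : Type) [Field k] (Sg : SGraph) (n : ℕ) : Type := RingQuot (Rel k Sg n)

/-- The quotient map onto the graded Brauer graph algebra. -/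
noncomputable def mkBGA (k : Type) [Field k] (Sg : SGraph) (n : ℕ) :
    FA k Sg →ₐ[k] BGA k Sg n :=
  RingQuot.mkAlgHom k (Rel k Sg n)

/-- The weight of a generator: idempotents have degree `0`, and the arrow `a_i` has
degree `d(i, i+1)`. -/
def wt (Sg : SGraph) : (Sg.Edge ⊕ Sg.H) → ℕ := Sum.elim (fun _ => 0) Sg.d

/-- The degree-`m` homogeneous component of the free algebra: the span of the products
of generators of total weight `m`. -/
noncomputable def FAcomp (k : Type) [Field k] (Sg : SGraph) (m : ℕ) :
    Submodule k (FA k Sg) :=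
  Submodule.span k
    { x | ∃ l : List (Sg.Edge ⊕ Sg.H),
        (l.map (wt Sg)).sum = m ∧ x = (l.map (FreeAlgebra.ι k)).prod }

/-- The degree-`m` homogeneous component `A(Σ,n)^m` of the graded Brauer graph algebra
(the relations being homogeneous, these components form a grading). -/
noncomputable def BGAcomp (k : Type) [Field k] (Sg : SGraph) (n m : ℕ) :
    Submodule k (BGA k Sg n) :=
  (FAcomp k Sg m).map (mkBGA k Sg n).toLinearMap

end SGraph

namespace SGraph

/-- The index set for the path basis elements `a^r_{i,j}` of `A(Σ,n)`: ordered pairs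
`(i, j)` of halfedges at a common vertex `v` together with `0 ≤ r < n / deg v`, excluding
the trivial case `(i, i, 0)`. -/
def PathIdx (Sg : SGraph) (n : ℕ) : Type :=
  { p : Sg.H × Sg.H × ℕ //
      Sg.vtx p.1 = Sg.vtx p.2.1 ∧ p.2.2 < n / Sg.deg (Sg.vtx p.1) ∧
        ¬(p.1 = p.2.1 ∧ p.2.2 = 0) }

/-- The candidate basis of `A(Σ,n)`: the idempotents `e_f`, the paths `a^r_{i,j}`, and
the cycles `c_{i_f}` at a chosen halfedge `i_f = pick f` of each edge `f`. -/
noncomputable def basisFun (k : Type) [Field k] (Sg : SGraph) (n : ℕ)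
    (pick : Sg.Edge → Sg.H) :
    (Sg.Edge ⊕ PathIdx Sg n ⊕ Sg.Edge) → BGA k Sg n
  | Sum.inl f => mkBGA k Sg n (gE k Sg f)
  | Sum.inr (Sum.inl p) => mkBGA k Sg n (pathElem k Sg p.1.2.1 p.1.1 p.1.2.2)
  | Sum.inr (Sum.inr f) => mkBGA k Sg n (cyc k Sg n (pick f))

end SGraph

open SGraph

/-!
STATEMENT 5: Let k be a field, Σ an S-graph all of whose vertices are internal, and n a
positive integer compatible with Σ. Fix for each edge f a halfedge i_f of f. Then the
images in A(Σ,n) of the idempotents e_f, the paths a^r_{i,j} (homogeneous of degree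
d(j,i) + r·deg(v)), and the cycles c_{i_f} (of degree n) form a k-basis of A(Σ,n). In
particular, A(Σ,n) is finite dimensional of dimension ∑_{v} val(v)² · n / deg(v).
-/

namespace SGraph

open Function

variable (Sg : SGraph)

theorem vtx_iterate (i : Sg.H) (m : ℕ) : Sg.vtx (Sg.succ^[m] i) = Sg.vtx i := by
  induction m with
  | zero => rfl
  | succ m ih => rw [Function.iterate_succ_apply', Sg.vtx_succ, ih]

theorem mem_halfedgesAt {v : Sg.V} {i : Sg.H} :
    i ∈ Sg.halfedgesAt v ↔ Sg.vtx i = v := by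
  simp [halfedgesAt]

theorem mem_periodicPts (i : Sg.H) : i ∈ periodicPts Sg.succ := by
  obtain ⟨m, hm⟩ := Sg.cyclic (Sg.succ i) i (Sg.vtx_succ i)
  exact ⟨m + 1, Nat.succ_pos _, by
    show Sg.succ^[m+1] i = i
    rw [Function.iterate_succ_apply]; exact hm⟩

theorem val_pos (i : Sg.H) : 0 < Sg.val (Sg.vtx i) :=
  Finset.card_pos.2 ⟨i, Sg.mem_halfedgesAt.2 rfl⟩

theorem orbit_image (i : Sg.H) :
    (Finset.range (minimalPeriod Sg.succ i)).image (fun m => Sg.succ^[m] i)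
      = Sg.halfedgesAt (Sg.vtx i) := by
  apply Finset.Subset.antisymm
  · intro j hj
    obtain ⟨m, _, rfl⟩ := Finset.mem_image.1 hj
    exact Sg.mem_halfedgesAt.2 (Sg.vtx_iterate i m)
  · intro j hj
    obtain ⟨m, hm⟩ := Sg.cyclic i j (Sg.mem_halfedgesAt.1 hj).symm
    refine Finset.mem_image.2 ⟨m % minimalPeriod Sg.succ i, ?_, ?_⟩
    · exact Finset.mem_range.2 (Nat.mod_lt _ (minimalPeriod_pos_of_mem_periodicPts (Sg.mem_periodicPts i)))
    · rw [iterate_mod_minimalPeriod_eq]; exact hm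

theorem minper_eq_val (i : Sg.H) :
    minimalPeriod Sg.succ i = Sg.val (Sg.vtx i) := by
  have h := Sg.orbit_image i
  have hc : ((Finset.range (minimalPeriod Sg.succ i)).image (fun m => Sg.succ^[m] i)).card
      = minimalPeriod Sg.succ i := by
    rw [Finset.card_image_of_injOn, Finset.card_range]
    intro a ha b hb hab
    exact iterate_injOn_Iio_minimalPeriod (by simpa using ha) (by simpa using hb) hab
  rw [val, ← h, hc]

theorem succ_iterate_val (i : Sg.H) : Sg.succ^[Sg.val (Sg.vtx i)] i = i := by
  rw [← Sg.minper_eq_val]; exact iterate_minimalPeriod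

theorem iterate_mod_val (i : Sg.H) (m : ℕ) :
    Sg.succ^[m % Sg.val (Sg.vtx i)] i = Sg.succ^[m] i := by
  rw [← Sg.minper_eq_val]; exact iterate_mod_minimalPeriod_eq

theorem succ_iterate_mul_val (i : Sg.H) (r : ℕ) : Sg.succ^[r * Sg.val (Sg.vtx i)] i = i := by
  rw [← Sg.iterate_mod_val, Nat.mul_mod_left]; rfl

theorem exists_iterate {j i : Sg.H} (h : Sg.vtx i = Sg.vtx j) :
    ∃ m, Sg.succ^[m] j = i := Sg.cyclic j i h.symm

theorem distTo_eq_find {j i : Sg.H} (hex : ∃ m, Sg.succ^[m] j = i) :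
    Sg.distTo j i = Nat.find hex := by
  simp only [distTo, dif_pos hex]

theorem succ_iterate_distTo {j i : Sg.H} (h : Sg.vtx i = Sg.vtx j) :
    Sg.succ^[Sg.distTo j i] j = i := by
  rw [Sg.distTo_eq_find (Sg.exists_iterate h)]
  exact Nat.find_spec (Sg.exists_iterate h)

theorem distTo_lt_val {j i : Sg.H} (h : Sg.vtx i = Sg.vtx j) :
    Sg.distTo j i < Sg.val (Sg.vtx j) := by
  obtain ⟨m, hm⟩ := Sg.exists_iterate h
  rw [Sg.distTo_eq_find (Sg.exists_iterate h)]
  have hwit : Sg.succ^[m % Sg.val (Sg.vtx j)] j = i := by rw [Sg.iterate_mod_val]; exact hm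
  exact lt_of_le_of_lt (Nat.find_le hwit) (Nat.mod_lt _ (Sg.val_pos j))

theorem distTo_iterate (j : Sg.H) {m : ℕ} (hm : m < Sg.val (Sg.vtx j)) :
    Sg.distTo j (Sg.succ^[m] j) = m := by
  have hex : ∃ m', Sg.succ^[m'] j = Sg.succ^[m] j := ⟨m, rfl⟩
  rw [Sg.distTo_eq_find hex]
  have h1 : Nat.find hex ≤ m := Nat.find_le rfl
  have h2 := Nat.find_spec hex
  have := iterate_injOn_Iio_minimalPeriod (f := Sg.succ) (x := j)
    (by rw [Set.mem_Iio, Sg.minper_eq_val]; exact lt_of_le_of_lt h1 hm)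
    (by rw [Set.mem_Iio, Sg.minper_eq_val]; exact hm) h2
  exact this

theorem distTo_self (j : Sg.H) : Sg.distTo j j = 0 := by
  have := Sg.distTo_iterate j (m := 0) (Sg.val_pos j)
  simpa using this

theorem succ_iterate_ne {j : Sg.H} {m : ℕ} (h0 : 0 < m) (hm : m < Sg.val (Sg.vtx j)) :
    Sg.succ^[m] j ≠ j := by
  intro hc
  have := Sg.distTo_iterate j hm
  rw [hc, Sg.distTo_self] at this
  omega

theorem sum_d_orbit (j : Sg.H) :
    ∑ s ∈ Finset.range (Sg.val (Sg.vtx j)), Sg.d (Sg.succ^[s] j) = Sg.deg (Sg.vtx j) := by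
  have h := Sg.orbit_image j
  rw [Sg.minper_eq_val] at h
  rw [deg, ← h, Finset.sum_image]
  intro a ha b hb hab
  exact iterate_injOn_Iio_minimalPeriod
    (by simpa [Sg.minper_eq_val] using Finset.mem_range.1 ha)
    (by simpa [Sg.minper_eq_val] using Finset.mem_range.1 hb) hab

end SGraph
namespace SGraph

variable (k : Type) [Field k] (Sg : SGraph)

/-- The path word of `t` arrows starting at the halfedge `j`. -/
noncomputable def pathWord (j : Sg.H) (t : ℕ) : FA k Sg :=
  ((List.range t).reverse.map fun m => gA k Sg (Sg.succ^[m] j)).prod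

theorem pathWord_zero (j : Sg.H) : pathWord k Sg j 0 = 1 := rfl

theorem range_reverse_succ (t : ℕ) : (List.range (t+1)).reverse = t :: (List.range t).reverse := by
  rw [List.range_succ, List.reverse_append]; rfl

theorem pathWord_succ (j : Sg.H) (t : ℕ) :
    pathWord k Sg j (t+1) = gA k Sg (Sg.succ^[t] j) * pathWord k Sg j t := by
  rw [pathWord, range_reverse_succ, List.map_cons, List.prod_cons]; rfl

theorem pathWord_one (j : Sg.H) : pathWord k Sg j 1 = gA k Sg j := by
  rw [pathWord_succ, pathWord_zero, mul_one]; rfl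

theorem pathWord_add (j : Sg.H) (a b : ℕ) :
    pathWord k Sg j (a + b) = pathWord k Sg (Sg.succ^[a] j) b * pathWord k Sg j a := by
  induction b with
  | zero => rw [pathWord_zero, one_mul, Nat.add_zero]
  | succ b ih =>
      rw [← Nat.add_assoc, pathWord_succ, ih, pathWord_succ, mul_assoc,
        Nat.add_comm a b, Function.iterate_add_apply]

theorem loopOnce_eq (j : Sg.H) :
    loopOnce k Sg j = pathWord k Sg j (Sg.val (Sg.vtx j)) := rfl

theorem loopOnce_pow (j : Sg.H) (r : ℕ) :
    loopOnce k Sg j ^ r = pathWord k Sg j (r * Sg.val (Sg.vtx j)) := by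
  induction r with
  | zero => rw [pow_zero, Nat.zero_mul, pathWord_zero]
  | succ r ih =>
      rw [pow_succ', ih, Nat.succ_mul, pathWord_add, Sg.succ_iterate_mul_val,
        ← loopOnce_eq]

theorem pathElem_eq (j i : Sg.H) (r : ℕ) :
    pathElem k Sg j i r = pathWord k Sg j (Sg.distTo j i + r * Sg.val (Sg.vtx j)) := by
  rw [pathElem, loopOnce_pow, Nat.add_comm, pathWord_add, Sg.succ_iterate_mul_val]; rfl

theorem cyc_eq (n : ℕ) (j : Sg.H) :
    cyc k Sg n j = pathWord k Sg j ((n / Sg.deg (Sg.vtx j)) * Sg.val (Sg.vtx j)) := by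
  rw [cyc, loopOnce_pow]

theorem list_rev_sum (g : ℕ → ℕ) (t : ℕ) :
    (((List.range t).reverse.map g)).sum = ∑ s ∈ Finset.range t, g s := by
  induction t with
  | zero => rfl
  | succ t ih => rw [range_reverse_succ, List.map_cons, List.sum_cons, ih,
      Finset.sum_range_succ, Nat.add_comm]

theorem pathWord_mem_FAcomp (j : Sg.H) (t : ℕ) :
    pathWord k Sg j t ∈ FAcomp k Sg (∑ s ∈ Finset.range t, Sg.d (Sg.succ^[s] j)) := by
  refine Submodule.subset_span ⟨(List.range t).reverse.map (fun s => Sum.inr (Sg.succ^[s] j)), ?_, ?_⟩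
  · rw [List.map_map, ← list_rev_sum]; rfl
  · rw [List.map_map]; rfl

theorem sum_d_block (j : Sg.H) (a : ℕ) :
    ∑ s ∈ Finset.range (a + Sg.val (Sg.vtx j)), Sg.d (Sg.succ^[s] j)
      = (∑ s ∈ Finset.range a, Sg.d (Sg.succ^[s] j)) + Sg.deg (Sg.vtx j) := by
  rw [Finset.sum_range_add]
  congr 1
  have := Sg.sum_d_orbit (Sg.succ^[a] j)
  rw [Sg.vtx_iterate] at this
  rw [← this]
  exact Finset.sum_congr rfl fun s _ => by rw [← Function.iterate_add_apply, Nat.add_comm]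

theorem sum_d_total (j : Sg.H) (a r : ℕ) :
    ∑ s ∈ Finset.range (a + r * Sg.val (Sg.vtx j)), Sg.d (Sg.succ^[s] j)
      = (∑ s ∈ Finset.range a, Sg.d (Sg.succ^[s] j)) + r * Sg.deg (Sg.vtx j) := by
  induction r with
  | zero => simp
  | succ r ih =>
      rw [Nat.succ_mul, ← Nat.add_assoc, sum_d_block, ih, Nat.succ_mul]
      ring

theorem dTo_def (j i : Sg.H) :
    Sg.dTo j i = ∑ m ∈ Finset.range (Sg.distTo j i), Sg.d (Sg.succ^[m] j) := rfl

theorem pathWord_mem_FAcomp' {j i : Sg.H} (h : Sg.vtx i = Sg.vtx j) (r : ℕ) :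
    pathElem k Sg j i r ∈ FAcomp k Sg (Sg.dTo j i + r * Sg.deg (Sg.vtx j)) := by
  rw [pathElem_eq k Sg j i r, dTo_def]
  have := pathWord_mem_FAcomp k Sg j (Sg.distTo j i + r * Sg.val (Sg.vtx j))
  rwa [sum_d_total] at this

theorem cyc_mem_FAcomp {n : ℕ} (hcompat : ∀ v : Sg.V, Sg.deg v ∣ n) (j : Sg.H) :
    cyc k Sg n j ∈ FAcomp k Sg n := by
  rw [cyc_eq]
  have := pathWord_mem_FAcomp k Sg j (0 + (n / Sg.deg (Sg.vtx j)) * Sg.val (Sg.vtx j))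
  rw [sum_d_total] at this
  simp only [Finset.range_zero, Finset.sum_empty, Nat.zero_add] at this ⊢
  rwa [Nat.div_mul_cancel (hcompat _)] at this

end SGraph
namespace SGraph

variable (k : Type) [Field k] (Sg : SGraph) (n : ℕ) (pick : Sg.Edge → Sg.H)

theorem deg_pos (j : Sg.H) : 0 < Sg.deg (Sg.vtx j) :=
  Finset.sum_pos (fun i _ => Sg.d_pos i) ⟨j, Sg.mem_halfedgesAt.2 rfl⟩

theorem N_pos (hn : 0 < n) (hcompat : ∀ v : Sg.V, Sg.deg v ∣ n) (j : Sg.H) :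
    0 < n / Sg.deg (Sg.vtx j) :=
  Nat.div_pos (Nat.le_of_dvd hn (hcompat _)) (Sg.deg_pos j)

/-- total number of arrows in the maximal cycle at the vertex of `j` -/
def Tt (j : Sg.H) : ℕ := (n / Sg.deg (Sg.vtx j)) * Sg.val (Sg.vtx j)

theorem Tt_pos (hn : 0 < n) (hcompat : ∀ v : Sg.V, Sg.deg v ∣ n) (j : Sg.H) :
    0 < Tt Sg n j :=
  Nat.mul_pos (Sg.N_pos n hn hcompat j) (Sg.val_pos j)

theorem Tt_congr {a b : Sg.H} (h : Sg.vtx a = Sg.vtx b) : Tt Sg n a = Tt Sg n b := by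
  rw [Tt, Tt, h]

theorem succ_iterate_Tt (j : Sg.H) : Sg.succ^[Tt Sg n j] j = j :=
  Sg.succ_iterate_mul_val j _

theorem edgeOf_tau (i : Sg.H) : Sg.edgeOf (Sg.τ i) = Sg.edgeOf i :=
  Quotient.sound (Or.inr (Sg.τ_invol i).symm)

theorem edgeOf_eq_cases {a b : Sg.H} (h : Sg.edgeOf a = Sg.edgeOf b) :
    a = b ∨ a = Sg.τ b := by
  have := Quotient.exact h
  rcases this with h' | h'
  · exact Or.inl h'.symm
  · exact Or.inr (by rw [h', Sg.τ_invol])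

theorem tau_ne_self (i : Sg.H) : i ≠ Sg.τ i := fun h => Sg.τ_ne i h.symm

/-- target (as a quiver vertex) of a basis element -/
def tgt : (Sg.Edge ⊕ (PathIdx Sg n ⊕ Sg.Edge)) → Sg.Edge
  | Sum.inl f => f
  | Sum.inr (Sum.inl p) => Sg.edgeOf p.1.1
  | Sum.inr (Sum.inr f) => f

/-- the number of arrows of a basis path -/
noncomputable def tOf (p : PathIdx Sg n) : ℕ :=
  Sg.distTo p.1.2.1 p.1.1 + p.1.2.2 * Sg.val (Sg.vtx p.1.2.1)

theorem pvtx (p : PathIdx Sg n) : Sg.vtx p.1.1 = Sg.vtx p.1.2.1 := p.2.1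

theorem pr_lt (p : PathIdx Sg n) : p.1.2.2 < n / Sg.deg (Sg.vtx p.1.2.1) := by
  have := p.2.2.1; rwa [pvtx] at this

theorem succ_iterate_tOf (p : PathIdx Sg n) :
    Sg.succ^[tOf Sg n p] p.1.2.1 = p.1.1 := by
  rw [tOf, Nat.add_comm, Function.iterate_add_apply, Sg.succ_iterate_distTo (pvtx Sg n p)]
  have hv : Sg.val (Sg.vtx p.1.2.1) = Sg.val (Sg.vtx p.1.1) := by rw [pvtx]
  rw [hv, Sg.succ_iterate_mul_val]

theorem tOf_pos (p : PathIdx Sg n) : 0 < tOf Sg n p := by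
  rcases Nat.eq_zero_or_pos (tOf Sg n p) with h | h
  swap
  · exact h
  · exfalso
    rw [tOf] at h
    have h1 : Sg.distTo p.1.2.1 p.1.1 = 0 := by omega
    have h2 : p.1.2.2 * Sg.val (Sg.vtx p.1.2.1) = 0 := by omega
    have h3 : p.1.2.2 = 0 := by
      rcases Nat.mul_eq_zero.1 h2 with h' | h'
      · exact h'
      · exact absurd h' (Nat.pos_iff_ne_zero.1 (Sg.val_pos p.1.2.1))
    have h4 : p.1.1 = p.1.2.1 := by
      have := Sg.succ_iterate_distTo (pvtx Sg n p)
      rw [h1] at this; exact this.symm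
    exact p.2.2.2 ⟨h4, h3⟩

theorem tOf_lt (p : PathIdx Sg n) : tOf Sg n p < Tt Sg n p.1.2.1 := by
  have h1 : Sg.distTo p.1.2.1 p.1.1 < Sg.val (Sg.vtx p.1.2.1) :=
    Sg.distTo_lt_val (pvtx Sg n p)
  have h2 : p.1.2.2 + 1 ≤ n / Sg.deg (Sg.vtx p.1.2.1) := pr_lt Sg n p
  calc tOf Sg n p < Sg.val (Sg.vtx p.1.2.1) + p.1.2.2 * Sg.val (Sg.vtx p.1.2.1) :=
        Nat.add_lt_add_right h1 _
    _ = (p.1.2.2 + 1) * Sg.val (Sg.vtx p.1.2.1) := by ring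
    _ ≤ Tt Sg n p.1.2.1 := Nat.mul_le_mul_right _ h2

/-- the path-basis index of the path of `t` arrows starting at `j` -/
noncomputable def pIdx (j : Sg.H) (t : ℕ) (h1 : t ≠ 0) (h2 : t < Tt Sg n j) :
    PathIdx Sg n := by
  refine ⟨(Sg.succ^[t % Sg.val (Sg.vtx j)] j, j, t / Sg.val (Sg.vtx j)), ?_, ?_, ?_⟩
  · exact Sg.vtx_iterate j _
  · rw [Sg.vtx_iterate j _]
    exact (Nat.div_lt_iff_lt_mul (Sg.val_pos j)).2 h2
  · rintro ⟨ha, hb⟩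
    have hlt : t % Sg.val (Sg.vtx j) < Sg.val (Sg.vtx j) := Nat.mod_lt _ (Sg.val_pos j)
    have hpos : 0 < t % Sg.val (Sg.vtx j) := by
      rcases Nat.eq_zero_or_pos (t % Sg.val (Sg.vtx j)) with h | h
      swap
      · exact h
      · exfalso
        have := Nat.div_add_mod t (Sg.val (Sg.vtx j))
        simp only [] at hb
        rw [hb, h] at this
        simp at this
        exact h1 this.symm
    exact Sg.succ_iterate_ne hpos hlt ha

theorem pIdx_tOf (j : Sg.H) (t : ℕ) (h1 : t ≠ 0) (h2 : t < Tt Sg n j) :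
    tOf Sg n (pIdx Sg n j t h1 h2) = t := by
  show Sg.distTo j (Sg.succ^[t % Sg.val (Sg.vtx j)] j) + (t / Sg.val (Sg.vtx j)) * Sg.val (Sg.vtx j) = t
  rw [Sg.distTo_iterate j (Nat.mod_lt _ (Sg.val_pos j))]
  exact Nat.mod_add_div' t _

theorem pIdx_eq (p : PathIdx Sg n) (h1 : tOf Sg n p ≠ 0) (h2 : tOf Sg n p < Tt Sg n p.1.2.1) :
    pIdx Sg n p.1.2.1 (tOf Sg n p) h1 h2 = p := by
  have hd : Sg.distTo p.1.2.1 p.1.1 < Sg.val (Sg.vtx p.1.2.1) := Sg.distTo_lt_val (pvtx Sg n p)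
  have hmod : tOf Sg n p % Sg.val (Sg.vtx p.1.2.1) = Sg.distTo p.1.2.1 p.1.1 := by
    rw [tOf, Nat.add_mul_mod_self_right, Nat.mod_eq_of_lt hd]
  have hdiv : tOf Sg n p / Sg.val (Sg.vtx p.1.2.1) = p.1.2.2 := by
    rw [tOf, Nat.add_mul_div_right _ _ (Sg.val_pos p.1.2.1), Nat.div_eq_of_lt hd, Nat.zero_add]
  apply Subtype.ext
  show (Sg.succ^[tOf Sg n p % Sg.val (Sg.vtx p.1.2.1)] p.1.2.1, p.1.2.1,
      tOf Sg n p / Sg.val (Sg.vtx p.1.2.1)) = p.1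
  rw [hmod, hdiv, Sg.succ_iterate_distTo (pvtx Sg n p)]

end SGraph
namespace SGraph

variable (k : Type) [Field k] (Sg : SGraph) (n : ℕ) (pick : Sg.Edge → Sg.H)

attribute [local instance] Classical.propDecidable

/-- The model module: free on the candidate basis index set. -/
abbrev Mod : Type := (Sg.Edge ⊕ (PathIdx Sg n ⊕ Sg.Edge)) →₀ k

/-- The value in the model of the path of `t` arrows starting at the halfedge `j`. -/
noncomputable def step (j : Sg.H) (t : ℕ) : Mod k Sg n :=
  if h1 : t = 0 then Finsupp.single (Sum.inl (Sg.edgeOf j)) 1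
  else if h2 : t < Tt Sg n j then
    Finsupp.single (Sum.inr (Sum.inl (pIdx Sg n j t h1 h2))) 1
  else if t = Tt Sg n j then
    (if pick (Sg.edgeOf j) = j then (1 : k) else (-1 : k) ^ (n - 1)) •
      Finsupp.single (Sum.inr (Sum.inr (Sg.edgeOf j))) (1 : k)
  else 0

theorem step_zero (j : Sg.H) : step k Sg n pick j 0 = Finsupp.single (Sum.inl (Sg.edgeOf j)) 1 := by
  rw [step, dif_pos rfl]

theorem step_lt {j : Sg.H} {t : ℕ} (h1 : t ≠ 0) (h2 : t < Tt Sg n j) :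
    step k Sg n pick j t = Finsupp.single (Sum.inr (Sum.inl (pIdx Sg n j t h1 h2))) 1 := by
  rw [step, dif_neg h1, dif_pos h2]

theorem step_Tt (hn : 0 < n) (hcompat : ∀ v : Sg.V, Sg.deg v ∣ n) (j : Sg.H) :
    step k Sg n pick j (Tt Sg n j) =
      (if pick (Sg.edgeOf j) = j then (1 : k) else (-1 : k) ^ (n - 1)) •
        Finsupp.single (Sum.inr (Sum.inr (Sg.edgeOf j))) (1 : k) := by
  rw [step, dif_neg (Nat.pos_iff_ne_zero.1 (Tt_pos Sg n hn hcompat j)),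
    dif_neg (lt_irrefl _), if_pos rfl]

theorem step_gt {j : Sg.H} {t : ℕ} (h : Tt Sg n j < t) : step k Sg n pick j t = 0 := by
  rw [step, dif_neg (by omega), dif_neg (by omega), if_neg (by omega)]

theorem step_pIdx (p : PathIdx Sg n) :
    step k Sg n pick p.1.2.1 (tOf Sg n p) = Finsupp.single (Sum.inr (Sum.inl p)) 1 := by
  rw [step_lt k Sg n pick (Nat.pos_iff_ne_zero.1 (tOf_pos Sg n p)) (tOf_lt Sg n p),
    pIdx_eq]

/-- action of the idempotent `e_f` on a basis element -/
noncomputable def eActB (f : Sg.Edge) (b : Sg.Edge ⊕ (PathIdx Sg n ⊕ Sg.Edge)) : Mod k Sg n :=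
  if tgt Sg n b = f then Finsupp.single b 1 else 0

/-- action of the arrow `a_{i0}` on a basis element -/
noncomputable def aActB (i0 : Sg.H) : (Sg.Edge ⊕ (PathIdx Sg n ⊕ Sg.Edge)) → Mod k Sg n
  | Sum.inl f => if Sg.edgeOf i0 = f then step k Sg n pick i0 1 else 0
  | Sum.inr (Sum.inl p) =>
      if p.1.1 = i0 then step k Sg n pick p.1.2.1 (tOf Sg n p + 1) else 0
  | Sum.inr (Sum.inr _) => 0

noncomputable def EAct (f : Sg.Edge) : Module.End k (Mod k Sg n) :=
  Finsupp.linearCombination k (eActB k Sg n f)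

noncomputable def AAct (i0 : Sg.H) : Module.End k (Mod k Sg n) :=
  Finsupp.linearCombination k (aActB k Sg n pick i0)

theorem EAct_single (f : Sg.Edge) (b : Sg.Edge ⊕ (PathIdx Sg n ⊕ Sg.Edge)) :
    EAct k Sg n f (Finsupp.single b 1) = eActB k Sg n f b := by
  rw [EAct, Finsupp.linearCombination_single, one_smul]

theorem AAct_single (i0 : Sg.H) (b : Sg.Edge ⊕ (PathIdx Sg n ⊕ Sg.Edge)) :
    AAct k Sg n pick i0 (Finsupp.single b 1) = aActB k Sg n pick i0 b := by
  rw [AAct, Finsupp.linearCombination_single, one_smul]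

/-- The representation of the free algebra on the model. -/
noncomputable def phi : FA k Sg →ₐ[k] Module.End k (Mod k Sg n) :=
  FreeAlgebra.lift k (Sum.elim (fun f => EAct k Sg n f) (fun i => AAct k Sg n pick i))

theorem phi_gE (f : Sg.Edge) : phi k Sg n pick (gE k Sg f) = EAct k Sg n f :=
  FreeAlgebra.lift_ι_apply _ _

theorem phi_gA (i : Sg.H) : phi k Sg n pick (gA k Sg i) = AAct k Sg n pick i :=
  FreeAlgebra.lift_ι_apply _ _

/-- The key stepping lemma: the arrow `a_{j+t}` moves the path of `t` arrows at `j` to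
the path of `t+1` arrows. -/
theorem AAct_step (hn : 0 < n) (hcompat : ∀ v : Sg.V, Sg.deg v ∣ n) (j : Sg.H) (t : ℕ) :
    AAct k Sg n pick (Sg.succ^[t] j) (step k Sg n pick j t) = step k Sg n pick j (t + 1) := by
  rcases Nat.eq_zero_or_pos t with rfl | ht0
  · rw [step_zero, AAct_single]
    show (if Sg.edgeOf j = Sg.edgeOf j then _ else _) = _
    rw [if_pos rfl]
    rfl
  rcases Nat.lt_trichotomy t (Tt Sg n j) with hlt | heq | hgt
  · rw [step_lt k Sg n pick (Nat.pos_iff_ne_zero.1 ht0) hlt, AAct_single]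
    show (if (pIdx Sg n j t _ hlt).1.1 = Sg.succ^[t] j then
        step k Sg n pick (pIdx Sg n j t _ hlt).1.2.1 (tOf Sg n (pIdx Sg n j t _ hlt) + 1)
      else 0) = _
    have h1 : (pIdx Sg n j t (Nat.pos_iff_ne_zero.1 ht0) hlt).1.1 = Sg.succ^[t] j := by
      show Sg.succ^[t % Sg.val (Sg.vtx j)] j = Sg.succ^[t] j
      exact Sg.iterate_mod_val j t
    have h2 : (pIdx Sg n j t (Nat.pos_iff_ne_zero.1 ht0) hlt).1.2.1 = j := rfl
    rw [if_pos h1, h2, pIdx_tOf]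
  · subst heq
    rw [step_Tt k Sg n pick hn hcompat, map_smul, AAct_single]
    show _ • (0 : Mod k Sg n) = _
    rw [smul_zero, step_gt k Sg n pick (Nat.lt_succ_self _)]
  · rw [step_gt k Sg n pick hgt, map_zero, step_gt k Sg n pick (by omega)]

theorem AAct_step_ne (i0 j : Sg.H) {t : ℕ} (ht : 0 < t) (h : Sg.succ^[t] j ≠ i0) :
    AAct k Sg n pick i0 (step k Sg n pick j t) = 0 := by
  rcases Nat.lt_trichotomy t (Tt Sg n j) with hlt | heq | hgt
  · rw [step_lt k Sg n pick (Nat.pos_iff_ne_zero.1 ht) hlt, AAct_single]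
    show (if (pIdx Sg n j t _ hlt).1.1 = i0 then _ else 0) = 0
    rw [if_neg]
    intro hc
    apply h
    rw [← hc]
    show Sg.succ^[t] j = Sg.succ^[t % Sg.val (Sg.vtx j)] j
    exact (Sg.iterate_mod_val j t).symm
  · subst heq
    rw [step]
    rcases eq_or_ne (Tt Sg n j) 0 with h0 | h0
    · rw [dif_pos h0]
      rw [h0] at ht; omega
    · rw [dif_neg h0, dif_neg (lt_irrefl _), if_pos rfl, map_smul, AAct_single]
      show _ • (0 : Mod k Sg n) = 0
      rw [smul_zero]
  · rw [step_gt k Sg n pick hgt, map_zero]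

end SGraph
namespace SGraph

variable (k : Type) [Field k] (Sg : SGraph) (n : ℕ) (pick : Sg.Edge → Sg.H)

attribute [local instance] Classical.propDecidable

theorem eActB_def (f : Sg.Edge) (b) :
    eActB k Sg n f b = if tgt Sg n b = f then Finsupp.single b 1 else 0 := rfl

theorem aActB_inl (i0 : Sg.H) (f : Sg.Edge) :
    aActB k Sg n pick i0 (Sum.inl f)
      = if Sg.edgeOf i0 = f then step k Sg n pick i0 1 else 0 := rfl

theorem aActB_inlP (i0 : Sg.H) (p : PathIdx Sg n) :
    aActB k Sg n pick i0 (Sum.inr (Sum.inl p))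
      = if p.1.1 = i0 then step k Sg n pick p.1.2.1 (tOf Sg n p + 1) else 0 := rfl

theorem aActB_inrC (i0 : Sg.H) (f : Sg.Edge) :
    aActB k Sg n pick i0 (Sum.inr (Sum.inr f)) = 0 := rfl

theorem end_ext {A B : Module.End k (Mod k Sg n)}
    (h : ∀ b, A (Finsupp.single b 1) = B (Finsupp.single b 1)) : A = B := by
  apply Finsupp.lhom_ext
  intro a c
  have h2 : (Finsupp.single a c : Mod k Sg n) = c • Finsupp.single a 1 := by
    rw [Finsupp.smul_single, smul_eq_mul, mul_one]
  rw [h2, map_smul, map_smul, h]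

theorem wordAct (hn : 0 < n) (hcompat : ∀ v : Sg.V, Sg.deg v ∣ n) (j : Sg.H) (t m : ℕ) :
    phi k Sg n pick (pathWord k Sg (Sg.succ^[t] j) m) (step k Sg n pick j t)
      = step k Sg n pick j (t + m) := by
  induction m with
  | zero => rw [pathWord_zero, map_one, Module.End.one_apply, Nat.add_zero]
  | succ m ih =>
      rw [pathWord_succ, map_mul, Module.End.mul_apply, ih, phi_gA]
      have h1 : Sg.succ^[m] (Sg.succ^[t] j) = Sg.succ^[t + m] j := by
        rw [← Function.iterate_add_apply, Nat.add_comm]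
      rw [h1, AAct_step k Sg n pick hn hcompat j (t + m), Nat.add_assoc]

theorem wordAct' (hn : 0 < n) (hcompat : ∀ v : Sg.V, Sg.deg v ∣ n) (j : Sg.H) (t m : ℕ)
    (i0 : Sg.H) (h : Sg.succ^[t] j = i0) :
    phi k Sg n pick (pathWord k Sg i0 m) (step k Sg n pick j t)
      = step k Sg n pick j (t + m) := by
  subst h; exact wordAct k Sg n pick hn hcompat j t m

theorem wordAct_zero (j : Sg.H) {m : ℕ} (hm : 0 < m) (v : Mod k Sg n)
    (hv : AAct k Sg n pick j v = 0) :
    phi k Sg n pick (pathWord k Sg j m) v = 0 := by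
  have h1 : m = 1 + (m - 1) := by omega
  rw [h1, pathWord_add, map_mul, Module.End.mul_apply, pathWord_one, phi_gA, hv, map_zero]

theorem cyc_eq_Tt (j : Sg.H) : cyc k Sg n j = pathWord k Sg j (Tt Sg n j) := cyc_eq k Sg n j

theorem cycAct (hn : 0 < n) (hcompat : ∀ v : Sg.V, Sg.deg v ∣ n) (j : Sg.H) (t : ℕ)
    (i0 : Sg.H) (h : Sg.succ^[t] j = i0) :
    phi k Sg n pick (cyc k Sg n i0) (step k Sg n pick j t)
      = step k Sg n pick j (t + Tt Sg n i0) := by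
  rw [cyc_eq_Tt]
  exact wordAct' k Sg n pick hn hcompat j t _ i0 h

theorem EAct_step (hn : 0 < n) (hcompat : ∀ v : Sg.V, Sg.deg v ∣ n) (f : Sg.Edge)
    (j : Sg.H) (t : ℕ) :
    EAct k Sg n f (step k Sg n pick j t)
      = if Sg.edgeOf (Sg.succ^[t] j) = f then step k Sg n pick j t else 0 := by
  rcases Nat.eq_zero_or_pos t with rfl | ht0
  · rw [step_zero, EAct_single, eActB_def]
    rfl
  rcases Nat.lt_trichotomy t (Tt Sg n j) with hlt | heq | hgt
  · rw [step_lt k Sg n pick (Nat.pos_iff_ne_zero.1 ht0) hlt, EAct_single, eActB_def]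
    have h1 : tgt Sg n (Sum.inr (Sum.inl (pIdx Sg n j t (Nat.pos_iff_ne_zero.1 ht0) hlt)))
        = Sg.edgeOf (Sg.succ^[t] j) := by
      show Sg.edgeOf (Sg.succ^[t % Sg.val (Sg.vtx j)] j) = _
      rw [Sg.iterate_mod_val j t]
    rw [h1]
  · subst heq
    rw [step_Tt k Sg n pick hn hcompat, map_smul, EAct_single, eActB_def]
    have h1 : tgt Sg n (Sum.inr (Sum.inr (Sg.edgeOf j))) = Sg.edgeOf j := rfl
    rw [h1, Sg.succ_iterate_Tt n j]
    split_ifs <;> simp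
  · rw [step_gt k Sg n pick hgt, map_zero]
    split_ifs <;> rfl

theorem sign_sq : ((-1 : k) ^ (n - 1)) * ((-1 : k) ^ (n - 1)) = 1 := by
  rw [← pow_add]
  exact Even.neg_one_pow ⟨n - 1, rfl⟩

theorem cyc_on_path (hn : 0 < n) (hcompat : ∀ v : Sg.V, Sg.deg v ∣ n)
    (i0 : Sg.H) (p : PathIdx Sg n) :
    phi k Sg n pick (cyc k Sg n i0) (Finsupp.single (Sum.inr (Sum.inl p)) 1) = 0 := by
  by_cases h : p.1.1 = i0
  · rw [← step_pIdx k Sg n pick p,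
      cycAct k Sg n pick hn hcompat p.1.2.1 (tOf Sg n p) i0
        (by rw [succ_iterate_tOf]; exact h)]
    apply step_gt
    have h2 : Tt Sg n i0 = Tt Sg n p.1.2.1 := Tt_congr Sg n (by rw [← h]; exact pvtx Sg n p)
    have := tOf_pos Sg n p
    omega
  · rw [cyc_eq_Tt]
    apply wordAct_zero k Sg n pick i0 (Tt_pos Sg n hn hcompat i0)
    rw [AAct_single, aActB_inlP, if_neg h]

theorem cyc_on_C (hn : 0 < n) (hcompat : ∀ v : Sg.V, Sg.deg v ∣ n)
    (i0 : Sg.H) (f : Sg.Edge) :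
    phi k Sg n pick (cyc k Sg n i0) (Finsupp.single (Sum.inr (Sum.inr f)) 1) = 0 := by
  rw [cyc_eq_Tt]
  apply wordAct_zero k Sg n pick i0 (Tt_pos Sg n hn hcompat i0)
  rw [AAct_single, aActB_inrC]

theorem rel_phi (hn : 0 < n) (hcompat : ∀ v : Sg.V, Sg.deg v ∣ n)
    (hpick : ∀ f : Sg.Edge, Sg.edgeOf (pick f) = f) :
    ∀ ⦃x y : FA k Sg⦄, Rel k Sg n x y → phi k Sg n pick x = phi k Sg n pick y := by
  intro x y r
  induction r with
  | orth f g hfg =>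
      rw [map_mul, map_zero, phi_gE, phi_gE]
      apply end_ext
      intro b
      rw [Module.End.mul_apply, LinearMap.zero_apply, EAct_single, eActB_def]
      split_ifs with h
      · rw [EAct_single, eActB_def, if_neg (by rw [h]; exact hfg.symm)]
      · rw [map_zero]
  | idem f =>
      rw [map_mul, phi_gE]
      apply end_ext
      intro b
      rw [Module.End.mul_apply, EAct_single, eActB_def]
      split_ifs with h
      · rw [EAct_single, eActB_def, if_pos h]
      · rw [map_zero]
  | sum_one =>
      rw [map_sum, map_one]
      apply end_ext
      intro b
      rw [LinearMap.sum_apply, Module.End.one_apply]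
      simp only [phi_gE, EAct_single, eActB_def]
      rw [Finset.sum_ite_eq, if_pos (Finset.mem_univ _)]
  | target i =>
      rw [map_mul, phi_gE, phi_gA]
      apply end_ext
      intro b
      rw [Module.End.mul_apply, AAct_single]
      match b with
      | Sum.inl f =>
          rw [aActB_inl]
          split_ifs with h
          · rw [EAct_step k Sg n pick hn hcompat, Function.iterate_one, if_pos rfl]
          · rw [map_zero]
      | Sum.inr (Sum.inl p) =>
          rw [aActB_inlP]
          split_ifs with h
          · rw [EAct_step k Sg n pick hn hcompat]
            rw [if_pos (by rw [Function.iterate_succ_apply', succ_iterate_tOf, h])]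
          · rw [map_zero]
      | Sum.inr (Sum.inr f) => rw [aActB_inrC, map_zero]
  | source i =>
      rw [map_mul, phi_gE, phi_gA]
      apply end_ext
      intro b
      rw [Module.End.mul_apply, EAct_single, eActB_def, AAct_single]
      match b with
      | Sum.inl f =>
          rw [aActB_inl]
          have ht : tgt Sg n (Sum.inl f) = f := rfl
          rw [ht]
          by_cases h : f = Sg.edgeOf i
          · rw [if_pos h, AAct_single, aActB_inl, if_pos h.symm]
          · rw [if_neg h, map_zero, if_neg (fun hc => h hc.symm)]
      | Sum.inr (Sum.inl p) =>
          rw [aActB_inlP]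
          have ht : tgt Sg n (Sum.inr (Sum.inl p)) = Sg.edgeOf p.1.1 := rfl
          rw [ht]
          by_cases h : Sg.edgeOf p.1.1 = Sg.edgeOf i
          · rw [if_pos h, AAct_single, aActB_inlP]
          · rw [if_neg h, map_zero, if_neg (fun hc => h (by rw [hc]))]
      | Sum.inr (Sum.inr f) =>
          rw [aActB_inrC]
          have ht : tgt Sg n (Sum.inr (Sum.inr f)) = f := rfl
          rw [ht]
          split_ifs with h
          · rw [AAct_single, aActB_inrC]
          · rw [map_zero]
  | comp_zero i j hedge hne =>
      rw [map_mul, map_zero, phi_gA, phi_gA]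
      apply end_ext
      intro b
      rw [Module.End.mul_apply, LinearMap.zero_apply, AAct_single]
      match b with
      | Sum.inl f =>
          rw [aActB_inl]
          split_ifs with h
          · exact AAct_step_ne k Sg n pick j i Nat.one_pos
              (by rw [Function.iterate_one]; exact hne)
          · rw [map_zero]
      | Sum.inr (Sum.inl p) =>
          rw [aActB_inlP]
          split_ifs with h
          · exact AAct_step_ne k Sg n pick j p.1.2.1 (Nat.succ_pos _)
              (by rw [Function.iterate_succ_apply', succ_iterate_tOf, h]; exact hne)
          · rw [map_zero]
      | Sum.inr (Sum.inr f) => rw [aActB_inrC, map_zero]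
  | cycle i =>
      rw [map_smul]
      apply end_ext
      intro b
      rw [LinearMap.smul_apply]
      match b with
      | Sum.inl f =>
          by_cases hf : f = Sg.edgeOf i
          · have e1 : Finsupp.single (Sum.inl f) (1:k) = step k Sg n pick i 0 := by
              rw [step_zero, hf]
            have e2 : Finsupp.single (Sum.inl f) (1:k) = step k Sg n pick (Sg.τ i) 0 := by
              rw [step_zero, hf, Sg.edgeOf_tau]
            conv_lhs => rw [e1]
            conv_rhs => rw [e2]
            rw [cycAct k Sg n pick hn hcompat i 0 i rfl,
              cycAct k Sg n pick hn hcompat (Sg.τ i) 0 (Sg.τ i) rfl,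
              Nat.zero_add, Nat.zero_add, step_Tt k Sg n pick hn hcompat,
              step_Tt k Sg n pick hn hcompat, Sg.edgeOf_tau]
            rcases Sg.edgeOf_eq_cases (hpick (Sg.edgeOf i)) with h | h
            · rw [if_pos h, if_neg (by rw [h]; exact Sg.tau_ne_self i), one_smul,
                smul_smul, sign_sq, one_smul]
            · rw [if_neg (by rw [h]; exact Sg.τ_ne i), if_pos h, one_smul]
          · rw [cyc_eq_Tt, cyc_eq_Tt,
              wordAct_zero k Sg n pick i (Tt_pos Sg n hn hcompat i) _
                (by rw [AAct_single, aActB_inl, if_neg (fun hc => hf hc.symm)]),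
              wordAct_zero k Sg n pick (Sg.τ i) (Tt_pos Sg n hn hcompat (Sg.τ i)) _
                (by rw [AAct_single, aActB_inl,
                  if_neg (fun hc => hf (by rw [← hc, Sg.edgeOf_tau]))]),
              smul_zero]
      | Sum.inr (Sum.inl p) =>
          rw [cyc_on_path k Sg n pick hn hcompat, cyc_on_path k Sg n pick hn hcompat,
            smul_zero]
      | Sum.inr (Sum.inr f) =>
          rw [cyc_on_C k Sg n pick hn hcompat, cyc_on_C k Sg n pick hn hcompat, smul_zero]

end SGraph
namespace SGraph

variable (k : Type) [Field k] (Sg : SGraph) (n : ℕ) (pick : Sg.Edge → Sg.H)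

attribute [local instance] Classical.propDecidable

/-- The representation of `A(Σ,n)` on the model. -/
noncomputable def Phi (hn : 0 < n) (hcompat : ∀ v : Sg.V, Sg.deg v ∣ n)
    (hpick : ∀ f : Sg.Edge, Sg.edgeOf (pick f) = f) :
    BGA k Sg n →ₐ[k] Module.End k (Mod k Sg n) :=
  RingQuot.liftAlgHom k ⟨phi k Sg n pick, rel_phi k Sg n pick hn hcompat hpick⟩

theorem Phi_mk (hn : 0 < n) (hcompat : ∀ v : Sg.V, Sg.deg v ∣ n)
    (hpick : ∀ f : Sg.Edge, Sg.edgeOf (pick f) = f) (x : FA k Sg) :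
    Phi k Sg n pick hn hcompat hpick (mkBGA k Sg n x) = phi k Sg n pick x :=
  RingQuot.liftAlgHom_mkAlgHom_apply _ _ _ _

/-- the sum of the idempotent basis vectors -/
noncomputable def uvec : Mod k Sg n :=
  ∑ f : Sg.Edge, Finsupp.single (Sum.inl f) (1 : k)

theorem phi_pathWord_u (hn : 0 < n) (hcompat : ∀ v : Sg.V, Sg.deg v ∣ n)
    (j : Sg.H) {t : ℕ} (ht : 0 < t) :
    phi k Sg n pick (pathWord k Sg j t) (uvec k Sg n) = step k Sg n pick j t := by
  have hs : phi k Sg n pick (pathWord k Sg j t) (uvec k Sg n)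
      = ∑ f : Sg.Edge, phi k Sg n pick (pathWord k Sg j t) (Finsupp.single (Sum.inl f) 1) :=
    map_sum _ _ _
  rw [hs, Finset.sum_eq_single (Sg.edgeOf j)]
  · rw [← step_zero k Sg n pick j, wordAct' k Sg n pick hn hcompat j 0 t j rfl, Nat.zero_add]
  · intro g _ hg
    apply wordAct_zero k Sg n pick j ht
    rw [AAct_single, aActB_inl, if_neg (fun hc => hg hc.symm)]
  · intro h
    exact absurd (Finset.mem_univ _) h

/-- evaluation of the representation at the sum of idempotent vectors -/
noncomputable def theta (hn : 0 < n) (hcompat : ∀ v : Sg.V, Sg.deg v ∣ n)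
    (hpick : ∀ f : Sg.Edge, Sg.edgeOf (pick f) = f) :
    BGA k Sg n →ₗ[k] Mod k Sg n where
  toFun x := Phi k Sg n pick hn hcompat hpick x (uvec k Sg n)
  map_add' x y := by simp only [map_add, LinearMap.add_apply]
  map_smul' c x := by simp only [map_smul, LinearMap.smul_apply, RingHom.id_apply]

theorem theta_basis (hn : 0 < n) (hcompat : ∀ v : Sg.V, Sg.deg v ∣ n)
    (hpick : ∀ f : Sg.Edge, Sg.edgeOf (pick f) = f)
    (b : Sg.Edge ⊕ (PathIdx Sg n ⊕ Sg.Edge)) :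
    theta k Sg n pick hn hcompat hpick (basisFun k Sg n pick b) = Finsupp.single b 1 := by
  match b with
  | Sum.inl f =>
      show Phi k Sg n pick hn hcompat hpick (mkBGA k Sg n (gE k Sg f)) (uvec k Sg n) = _
      rw [Phi_mk, phi_gE]
      have hs : EAct k Sg n f (uvec k Sg n)
          = ∑ g : Sg.Edge, EAct k Sg n f (Finsupp.single (Sum.inl g) 1) := map_sum _ _ _
      rw [hs, Finset.sum_eq_single f]
      · rw [EAct_single, eActB_def]
        exact if_pos rfl
      · intro g _ hg
        rw [EAct_single, eActB_def]
        exact if_neg (fun hc => hg hc)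
      · intro h
        exact absurd (Finset.mem_univ _) h
  | Sum.inr (Sum.inl p) =>
      show Phi k Sg n pick hn hcompat hpick
        (mkBGA k Sg n (pathElem k Sg p.1.2.1 p.1.1 p.1.2.2)) (uvec k Sg n) = _
      rw [Phi_mk, pathElem_eq k Sg p.1.2.1 p.1.1 p.1.2.2]
      have h1 := phi_pathWord_u k Sg n pick hn hcompat p.1.2.1 (tOf_pos Sg n p)
      exact h1.trans (step_pIdx k Sg n pick p)
  | Sum.inr (Sum.inr f) =>
      show Phi k Sg n pick hn hcompat hpick
        (mkBGA k Sg n (cyc k Sg n (pick f))) (uvec k Sg n) = _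
      rw [Phi_mk, cyc_eq_Tt,
        phi_pathWord_u k Sg n pick hn hcompat (pick f) (Tt_pos Sg n hn hcompat (pick f)),
        step_Tt k Sg n pick hn hcompat, hpick f, if_pos rfl, one_smul]

theorem basis_li (hn : 0 < n) (hcompat : ∀ v : Sg.V, Sg.deg v ∣ n)
    (hpick : ∀ f : Sg.Edge, Sg.edgeOf (pick f) = f) :
    LinearIndependent k (basisFun k Sg n pick) := by
  apply LinearIndependent.of_comp (theta k Sg n pick hn hcompat hpick)
  have he : (theta k Sg n pick hn hcompat hpick) ∘ (basisFun k Sg n pick)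
      = fun b => Finsupp.single b (1 : k) :=
    funext (theta_basis k Sg n pick hn hcompat hpick)
  rw [he, ← Finsupp.coe_basisSingleOne]
  exact Module.Basis.linearIndependent _

end SGraph
namespace SGraph

variable (k : Type) [Field k] (Sg : SGraph) (n : ℕ) (pick : Sg.Edge → Sg.H)

attribute [local instance] Classical.propDecidable

theorem Qrel {x y : FA k Sg} (w : Rel k Sg n x y) :
    mkBGA k Sg n x = mkBGA k Sg n y :=
  RingQuot.mkAlgHom_rel k w

theorem QE_mul_QE (f g : Sg.Edge) :
    mkBGA k Sg n (gE k Sg f) * mkBGA k Sg n (gE k Sg g)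
      = if f = g then mkBGA k Sg n (gE k Sg f) else 0 := by
  split_ifs with h
  · subst h
    rw [← map_mul]
    exact Qrel k Sg n (Rel.idem f)
  · rw [← map_mul]
    have := Qrel k Sg n (Rel.orth f g h)
    rwa [map_zero] at this

theorem QE_mul_QA (f : Sg.Edge) (i : Sg.H) :
    mkBGA k Sg n (gE k Sg f) * mkBGA k Sg n (gA k Sg i)
      = if f = Sg.edgeOf (Sg.succ i) then mkBGA k Sg n (gA k Sg i) else 0 := by
  split_ifs with h
  · subst h
    rw [← map_mul]
    exact Qrel k Sg n (Rel.target i)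
  · have h1 : mkBGA k Sg n (gA k Sg i)
        = mkBGA k Sg n (gE k Sg (Sg.edgeOf (Sg.succ i))) * mkBGA k Sg n (gA k Sg i) := by
      rw [← map_mul]; exact (Qrel k Sg n (Rel.target i)).symm
    rw [h1, ← mul_assoc, QE_mul_QE, if_neg h, zero_mul]

theorem QE_mul_pw (f : Sg.Edge) (j : Sg.H) {t : ℕ} (ht : 0 < t) :
    mkBGA k Sg n (gE k Sg f) * mkBGA k Sg n (pathWord k Sg j t)
      = if f = Sg.edgeOf (Sg.succ^[t] j) then mkBGA k Sg n (pathWord k Sg j t) else 0 := by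
  obtain ⟨s, rfl⟩ : ∃ s, t = s + 1 := ⟨t - 1, by omega⟩
  rw [pathWord_succ, map_mul, ← mul_assoc, QE_mul_QA, Function.iterate_succ_apply']
  split_ifs with h
  · rfl
  · rw [zero_mul]

theorem QA_mul_pw (i0 j : Sg.H) {t : ℕ} (ht : 0 < t) (h : Sg.succ^[t] j ≠ i0) :
    mkBGA k Sg n (gA k Sg i0) * mkBGA k Sg n (pathWord k Sg j t) = 0 := by
  obtain ⟨s, rfl⟩ : ∃ s, t = s + 1 := ⟨t - 1, by omega⟩
  by_cases he : Sg.edgeOf (Sg.succ^[s+1] j) = Sg.edgeOf i0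
  · have hz : mkBGA k Sg n (gA k Sg i0) * mkBGA k Sg n (gA k Sg (Sg.succ^[s] j)) = 0 := by
      rw [← map_mul]
      have := Qrel k Sg n (Rel.comp_zero (Sg.succ^[s] j) i0
        (by rw [Function.iterate_succ_apply'] at he; exact he)
        (by rw [Function.iterate_succ_apply'] at h; exact h))
      rwa [map_zero] at this
    rw [pathWord_succ, map_mul, ← mul_assoc, hz, zero_mul]
  · have h1 : mkBGA k Sg n (gA k Sg i0)
        = mkBGA k Sg n (gA k Sg i0) * mkBGA k Sg n (gE k Sg (Sg.edgeOf i0)) := by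
      rw [← map_mul]; exact (Qrel k Sg n (Rel.source i0)).symm
    rw [h1, mul_assoc, QE_mul_pw k Sg n (Sg.edgeOf i0) j (Nat.succ_pos s),
      if_neg (fun hc => he hc.symm), mul_zero]

theorem Q_cyc_flip (i : Sg.H) :
    mkBGA k Sg n (cyc k Sg n i)
      = ((-1 : k) ^ (n - 1)) • mkBGA k Sg n (cyc k Sg n (Sg.τ i)) := by
  have := Qrel k Sg n (Rel.cycle i)
  rwa [map_smul] at this

theorem QA_mul_QE (i0 : Sg.H) (g : Sg.Edge) :
    mkBGA k Sg n (gA k Sg i0) * mkBGA k Sg n (gE k Sg g)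
      = if g = Sg.edgeOf i0 then mkBGA k Sg n (gA k Sg i0) else 0 := by
  split_ifs with h
  · subst h
    rw [← map_mul]
    exact Qrel k Sg n (Rel.source i0)
  · have h1 : mkBGA k Sg n (gA k Sg i0)
        = mkBGA k Sg n (gA k Sg i0) * mkBGA k Sg n (gE k Sg (Sg.edgeOf i0)) := by
      rw [← map_mul]; exact (Qrel k Sg n (Rel.source i0)).symm
    rw [h1, mul_assoc, QE_mul_QE, if_neg (fun hc => h hc.symm), mul_zero]

theorem QA_mul_cyc (hn : 0 < n) (hcompat : ∀ v : Sg.V, Sg.deg v ∣ n) (i0 j0 : Sg.H) :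
    mkBGA k Sg n (gA k Sg i0) * mkBGA k Sg n (cyc k Sg n j0) = 0 := by
  by_cases h : i0 = j0
  · subst h
    rw [Q_cyc_flip, mul_smul_comm, cyc_eq_Tt,
      QA_mul_pw k Sg n i0 (Sg.τ i0) (Tt_pos Sg n hn hcompat (Sg.τ i0))
        (by rw [Sg.succ_iterate_Tt]; exact Sg.τ_ne i0), smul_zero]
  · rw [cyc_eq_Tt]
    exact QA_mul_pw k Sg n i0 j0 (Tt_pos Sg n hn hcompat j0)
      (by rw [Sg.succ_iterate_Tt]; exact fun hc => h hc.symm)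

theorem one_mem_SpanB :
    (1 : BGA k Sg n) ∈ Submodule.span k (Set.range (basisFun k Sg n pick)) := by
  have h1 : (1 : BGA k Sg n) = ∑ f : Sg.Edge, mkBGA k Sg n (gE k Sg f) := by
    have := Qrel k Sg n (Rel.sum_one (k := k))
    rw [map_sum, map_one] at this
    exact this.symm
  rw [h1]
  exact Submodule.sum_mem _ (fun f _ => Submodule.subset_span ⟨Sum.inl f, rfl⟩)

theorem pw_mem (hn : 0 < n) (hcompat : ∀ v : Sg.V, Sg.deg v ∣ n)
    (hpick : ∀ f : Sg.Edge, Sg.edgeOf (pick f) = f) (j : Sg.H) (t : ℕ) :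
    mkBGA k Sg n (pathWord k Sg j t) ∈ Submodule.span k (Set.range (basisFun k Sg n pick)) := by
  rcases Nat.eq_zero_or_pos t with rfl | ht0
  · rw [pathWord_zero, map_one]
    exact one_mem_SpanB k Sg n pick
  rcases Nat.lt_trichotomy t (Tt Sg n j) with hlt | heq | hgt
  · set p := pIdx Sg n j t (Nat.pos_iff_ne_zero.1 ht0) hlt with hp
    have ht' : tOf Sg n p = t := pIdx_tOf Sg n j t _ hlt
    have hb : mkBGA k Sg n (pathWord k Sg j t) = basisFun k Sg n pick (Sum.inr (Sum.inl p)) := by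
      show _ = mkBGA k Sg n (pathElem k Sg p.1.2.1 p.1.1 p.1.2.2)
      rw [pathElem_eq]
      show mkBGA k Sg n (pathWord k Sg j t) = mkBGA k Sg n (pathWord k Sg j (tOf Sg n p))
      rw [ht']
    rw [hb]
    exact Submodule.subset_span ⟨_, rfl⟩
  · rw [heq, ← cyc_eq_Tt]
    rcases Sg.edgeOf_eq_cases (hpick (Sg.edgeOf j)) with h | h
    · have hb : mkBGA k Sg n (cyc k Sg n j) = basisFun k Sg n pick (Sum.inr (Sum.inr (Sg.edgeOf j))) := by
        show _ = mkBGA k Sg n (cyc k Sg n (pick (Sg.edgeOf j)))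
        rw [h]
      rw [hb]
      exact Submodule.subset_span ⟨_, rfl⟩
    · rw [Q_cyc_flip]
      have hb : mkBGA k Sg n (cyc k Sg n (Sg.τ j)) = basisFun k Sg n pick (Sum.inr (Sum.inr (Sg.edgeOf j))) := by
        show _ = mkBGA k Sg n (cyc k Sg n (pick (Sg.edgeOf j)))
        rw [h]
      rw [hb]
      exact Submodule.smul_mem _ _ (Submodule.subset_span ⟨_, rfl⟩)
  · obtain ⟨w, rfl⟩ : ∃ w, t = Tt Sg n j + (1 + w) := ⟨t - Tt Sg n j - 1, by omega⟩
    rw [pathWord_add, Sg.succ_iterate_Tt, pathWord_add, pathWord_one, map_mul, map_mul,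
      ← cyc_eq_Tt, mul_assoc, QA_mul_cyc k Sg n hn hcompat, mul_zero]
    exact Submodule.zero_mem _

theorem genmul_mem (hn : 0 < n) (hcompat : ∀ v : Sg.V, Sg.deg v ∣ n)
    (hpick : ∀ f : Sg.Edge, Sg.edgeOf (pick f) = f) (z : Sg.Edge ⊕ Sg.H)
    (b : Sg.Edge ⊕ (PathIdx Sg n ⊕ Sg.Edge)) :
    mkBGA k Sg n (FreeAlgebra.ι k z) * basisFun k Sg n pick b
      ∈ Submodule.span k (Set.range (basisFun k Sg n pick)) := by
  have hbP : ∀ p : PathIdx Sg n, basisFun k Sg n pick (Sum.inr (Sum.inl p))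
      = mkBGA k Sg n (pathWord k Sg p.1.2.1 (tOf Sg n p)) := by
    intro p
    show mkBGA k Sg n (pathElem k Sg p.1.2.1 p.1.1 p.1.2.2) = _
    rw [pathElem_eq]
    rfl
  match z, b with
  | Sum.inl f, Sum.inl g =>
      show mkBGA k Sg n (gE k Sg f) * mkBGA k Sg n (gE k Sg g) ∈ _
      rw [QE_mul_QE]
      split_ifs with h
      · exact Submodule.subset_span ⟨Sum.inl f, rfl⟩
      · exact Submodule.zero_mem _
  | Sum.inl f, Sum.inr (Sum.inl p) =>
      show mkBGA k Sg n (gE k Sg f) * basisFun k Sg n pick (Sum.inr (Sum.inl p)) ∈ _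
      rw [hbP, QE_mul_pw k Sg n f p.1.2.1 (tOf_pos Sg n p)]
      split_ifs with h
      · exact pw_mem k Sg n pick hn hcompat hpick _ _
      · exact Submodule.zero_mem _
  | Sum.inl f, Sum.inr (Sum.inr g) =>
      show mkBGA k Sg n (gE k Sg f) * mkBGA k Sg n (cyc k Sg n (pick g)) ∈ _
      rw [cyc_eq_Tt, QE_mul_pw k Sg n f (pick g) (Tt_pos Sg n hn hcompat (pick g))]
      split_ifs with h
      · exact pw_mem k Sg n pick hn hcompat hpick _ _
      · exact Submodule.zero_mem _
  | Sum.inr i0, Sum.inl g =>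
      show mkBGA k Sg n (gA k Sg i0) * mkBGA k Sg n (gE k Sg g) ∈ _
      rw [QA_mul_QE]
      split_ifs with h
      · rw [← pathWord_one k Sg i0]
        exact pw_mem k Sg n pick hn hcompat hpick _ _
      · exact Submodule.zero_mem _
  | Sum.inr i0, Sum.inr (Sum.inl p) =>
      show mkBGA k Sg n (gA k Sg i0) * basisFun k Sg n pick (Sum.inr (Sum.inl p)) ∈ _
      rw [hbP]
      by_cases h : Sg.succ^[tOf Sg n p] p.1.2.1 = i0
      · rw [← h, ← map_mul, ← pathWord_succ]
        exact pw_mem k Sg n pick hn hcompat hpick _ _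
      · rw [QA_mul_pw k Sg n i0 p.1.2.1 (tOf_pos Sg n p) h]
        exact Submodule.zero_mem _
  | Sum.inr i0, Sum.inr (Sum.inr g) =>
      show mkBGA k Sg n (gA k Sg i0) * mkBGA k Sg n (cyc k Sg n (pick g)) ∈ _
      rw [QA_mul_cyc k Sg n hn hcompat]
      exact Submodule.zero_mem _

theorem span_top (hn : 0 < n) (hcompat : ∀ v : Sg.V, Sg.deg v ∣ n)
    (hpick : ∀ f : Sg.Edge, Sg.edgeOf (pick f) = f) :
    Submodule.span k (Set.range (basisFun k Sg n pick)) = ⊤ := by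
  refine le_antisymm le_top ?_
  intro x _
  obtain ⟨w, rfl⟩ := RingQuot.mkAlgHom_surjective k (Rel k Sg n) x
  have key : ∀ w : FA k Sg, ∀ y ∈ Submodule.span k (Set.range (basisFun k Sg n pick)),
      mkBGA k Sg n w * y ∈ Submodule.span k (Set.range (basisFun k Sg n pick)) := by
    intro w
    induction w using FreeAlgebra.induction with
    | grade0 r =>
        intro y hy
        have : mkBGA k Sg n (algebraMap k (FA k Sg) r) * y = r • y := by
          rw [AlgHom.commutes, ← Algebra.smul_def]
        rw [this]
        exact Submodule.smul_mem _ _ hy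
    | grade1 z =>
        intro y hy
        have hle : Submodule.span k (Set.range (basisFun k Sg n pick)) ≤
            Submodule.comap (LinearMap.mulLeft k (mkBGA k Sg n (FreeAlgebra.ι k z)))
              (Submodule.span k (Set.range (basisFun k Sg n pick))) := by
          rw [Submodule.span_le]
          rintro _ ⟨b, rfl⟩
          exact genmul_mem k Sg n pick hn hcompat hpick z b
        exact hle hy
    | mul a b ha hb =>
        intro y hy
        rw [map_mul, mul_assoc]
        exact ha _ (hb _ hy)
    | add a b ha hb =>
        intro y hy
        rw [map_add, add_mul]
        exact add_mem (ha _ hy) (hb _ hy)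
  have := key w 1 (one_mem_SpanB k Sg n pick)
  rwa [mul_one] at this

end SGraph
namespace SGraph

variable (Sg : SGraph) (n : ℕ)

/-- `PathIdx` as a subtype of a finite type. -/
def pathIdxEquiv : PathIdx Sg n ≃
    {q : Sg.H × Sg.H × Fin n //
      Sg.vtx q.1 = Sg.vtx q.2.1 ∧ (q.2.2 : ℕ) < n / Sg.deg (Sg.vtx q.1) ∧
        ¬(q.1 = q.2.1 ∧ (q.2.2 : ℕ) = 0)} where
  toFun p := ⟨(p.1.1, p.1.2.1,
      ⟨p.1.2.2, lt_of_lt_of_le p.2.2.1 (Nat.div_le_self _ _)⟩),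
      p.2.1, p.2.2.1, p.2.2.2⟩
  invFun q := ⟨(q.1.1, q.1.2.1, (q.1.2.2 : ℕ)), q.2.1, q.2.2.1, q.2.2.2⟩
  left_inv p := rfl
  right_inv q := rfl

noncomputable instance instFintypePathIdx : Fintype (PathIdx Sg n) := by
  classical
  exact Fintype.ofEquiv _ (pathIdxEquiv Sg n).symm

theorem sum_val (Sg : SGraph) : ∑ v : Sg.V, Sg.val v = Fintype.card Sg.H := by
  rw [← Finset.card_univ]
  rw [Finset.card_eq_sum_card_fiberwise (f := Sg.vtx) (t := Finset.univ)
    (fun x _ => Finset.mem_univ _)]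
  rfl

theorem card_H_eq : Fintype.card Sg.H = 2 * Fintype.card Sg.Edge := by
  classical
  rw [← Finset.card_univ,
    Finset.card_eq_sum_card_fiberwise (f := Sg.edgeOf) (t := Finset.univ)
      (fun x _ => Finset.mem_univ _)]
  have h2 : ∀ f : Sg.Edge, (Finset.univ.filter (fun x => Sg.edgeOf x = f)).card = 2 := by
    intro f
    obtain ⟨i, rfl⟩ := Quotient.exists_rep f
    have hf : Finset.univ.filter (fun x => Sg.edgeOf x = Quotient.mk (Sg.edgeSetoid) i)
        = {i, Sg.τ i} := by
      ext x
      simp only [Finset.mem_filter, Finset.mem_univ, true_and, Finset.mem_insert,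
        Finset.mem_singleton]
      constructor
      · intro h
        exact Sg.edgeOf_eq_cases h
      · rintro (rfl | rfl)
        · rfl
        · exact Sg.edgeOf_tau i
    rw [hf, Finset.card_insert_of_notMem (by
      simp only [Finset.mem_singleton]; exact Sg.tau_ne_self i), Finset.card_singleton]
  rw [Finset.sum_congr rfl (fun f _ => h2 f), Finset.sum_const, Finset.card_univ,
    smul_eq_mul, Nat.mul_comm]

theorem count_fin (N : ℕ) (hN : N ≤ n) :
    ∑ r : Fin n, (if (r : ℕ) < N then 1 else 0) = N := by
  classical
  rw [Fin.sum_univ_eq_sum_range (fun r => if r < N then 1 else 0) n,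
    ← Finset.card_filter]
  have : (Finset.range n).filter (fun x => x < N) = Finset.range N := by
    ext x
    simp only [Finset.mem_filter, Finset.mem_range]
    omega
  rw [this, Finset.card_range]

theorem card_pathIdx (hn : 0 < n) (hcompat : ∀ v : Sg.V, Sg.deg v ∣ n) :
    Fintype.card (PathIdx Sg n) + Fintype.card Sg.H
      = ∑ v : Sg.V, Sg.val v * Sg.val v * (n / Sg.deg v) := by
  classical
  rw [Fintype.card_congr (pathIdxEquiv Sg n), Fintype.card_subtype]
  set triv : Sg.H × Sg.H × Fin n → Prop := fun q => q.1 = q.2.1 ∧ (q.2.2 : ℕ) = 0 with htriv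
  set Pfull : Sg.H × Sg.H × Fin n → Prop :=
    fun q => Sg.vtx q.1 = Sg.vtx q.2.1 ∧ (q.2.2 : ℕ) < n / Sg.deg (Sg.vtx q.1) with hPfull
  have key := Finset.card_filter_add_card_filter_not
    (s := Finset.univ.filter Pfull) (p := triv)
  have hA : (Finset.univ.filter Pfull).filter triv = Finset.univ.filter triv := by
    ext q
    simp only [Finset.mem_filter, Finset.mem_univ, true_and, hPfull, htriv]
    constructor
    · rintro ⟨-, h⟩; exact h
    · rintro ⟨h1, h2⟩
      exact ⟨⟨by rw [h1], by rw [h2]; exact Sg.N_pos n hn hcompat q.1⟩, h1, h2⟩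
  have hB : (Finset.univ.filter Pfull).filter (fun q => ¬ triv q)
      = Finset.univ.filter (fun q =>
          Sg.vtx q.1 = Sg.vtx q.2.1 ∧ (q.2.2 : ℕ) < n / Sg.deg (Sg.vtx q.1) ∧
            ¬(q.1 = q.2.1 ∧ (q.2.2 : ℕ) = 0)) := by
    ext q
    simp only [Finset.mem_filter, Finset.mem_univ, true_and, hPfull, htriv]
    tauto
  have hC : (Finset.univ.filter triv).card = Fintype.card Sg.H := by
    rw [← Finset.card_univ]
    apply Finset.card_bij' (fun (q : Sg.H × Sg.H × Fin n) _ => q.1)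
      (fun i _ => (i, i, (⟨0, hn⟩ : Fin n)))
    · intro a ha
      exact Finset.mem_univ _
    · intro a ha
      simp [htriv]
    · intro a ha
      simp only [Finset.mem_filter, Finset.mem_univ, true_and, htriv] at ha
      obtain ⟨a1, a2, a3⟩ := a
      obtain ⟨h1, h2⟩ := ha
      simp only at h1 h2 ⊢
      subst h1
      have h3 : a3 = (⟨0, hn⟩ : Fin n) := Fin.ext h2
      rw [h3]
    · intro a ha
      rfl
  have hD : (Finset.univ.filter Pfull).card
      = ∑ v : Sg.V, Sg.val v * Sg.val v * (n / Sg.deg v) := by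
    rw [Finset.card_filter, Fintype.sum_prod_type]
    have hInner : ∀ i : Sg.H,
        (∑ q : Sg.H × Fin n, if Pfull (i, q) then 1 else 0)
          = Sg.val (Sg.vtx i) * (n / Sg.deg (Sg.vtx i)) := by
      intro i
      rw [Fintype.sum_prod_type]
      have h1 : ∀ j : Sg.H, (∑ r : Fin n, if Pfull (i, j, r) then 1 else 0)
          = if Sg.vtx i = Sg.vtx j then n / Sg.deg (Sg.vtx i) else 0 := by
        intro j
        split_ifs with h
        · rw [← count_fin n (n / Sg.deg (Sg.vtx i)) (Nat.div_le_self _ _)]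
          apply Finset.sum_congr rfl
          intro r _
          simp only [hPfull, h, true_and]
        · apply Finset.sum_eq_zero
          intro r _
          simp only [hPfull]
          rw [if_neg (fun hc => h hc.1)]
      rw [Finset.sum_congr rfl (fun j _ => h1 j), ← Finset.sum_filter]
      have h2 : Finset.univ.filter (fun j => Sg.vtx i = Sg.vtx j)
          = Sg.halfedgesAt (Sg.vtx i) := by
        ext j
        simp only [Finset.mem_filter, Finset.mem_univ, true_and, halfedgesAt]
        exact ⟨fun h => h.symm, fun h => h.symm⟩
      rw [h2, Finset.sum_const, smul_eq_mul]
      rfl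
    rw [Finset.sum_congr rfl (fun i _ => hInner i)]
    rw [← Finset.sum_fiberwise_of_maps_to (g := Sg.vtx) (t := Finset.univ)
      (fun x _ => Finset.mem_univ _)]
    apply Finset.sum_congr rfl
    intro v _
    have h3 : ∀ i ∈ Finset.univ.filter (fun i => Sg.vtx i = v),
        Sg.val (Sg.vtx i) * (n / Sg.deg (Sg.vtx i)) = Sg.val v * (n / Sg.deg v) := by
      intro i hi
      simp only [Finset.mem_filter, Finset.mem_univ, true_and] at hi
      rw [hi]
    rw [Finset.sum_congr rfl h3, Finset.sum_const, smul_eq_mul]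
    have h4 : (Finset.univ.filter (fun i => Sg.vtx i = v)).card = Sg.val v := rfl
    rw [h4, Nat.mul_assoc]
  have hfinal : (Finset.univ.filter (fun q : Sg.H × Sg.H × Fin n =>
      Sg.vtx q.1 = Sg.vtx q.2.1 ∧ (q.2.2 : ℕ) < n / Sg.deg (Sg.vtx q.1) ∧
        ¬(q.1 = q.2.1 ∧ (q.2.2 : ℕ) = 0))).card + Fintype.card Sg.H
      = ∑ v : Sg.V, Sg.val v * Sg.val v * (n / Sg.deg v) := by
    rw [← hB, ← hC, ← hA, ← hD]
    omega
  exact hfinal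

end SGraph
theorem statement5 (k : Type) [Field k] (Sg : SGraph) (n : ℕ) (hn : 0 < n)
    (hcompat : ∀ v : Sg.V, Sg.deg v ∣ n)
    (pick : Sg.Edge → Sg.H) (hpick : ∀ f : Sg.Edge, Sg.edgeOf (pick f) = f) :
    LinearIndependent k (basisFun k Sg n pick) ∧
    Submodule.span k (Set.range (basisFun k Sg n pick)) = ⊤ ∧
    (∀ p : PathIdx Sg n,
      mkBGA k Sg n (pathElem k Sg p.1.2.1 p.1.1 p.1.2.2) ∈
        BGAcomp k Sg n (Sg.dTo p.1.2.1 p.1.1 + p.1.2.2 * Sg.deg (Sg.vtx p.1.1))) ∧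
    (∀ f : Sg.Edge, mkBGA k Sg n (cyc k Sg n (pick f)) ∈ BGAcomp k Sg n n) ∧
    Module.Finite k (BGA k Sg n) ∧
    Module.finrank k (BGA k Sg n) = ∑ v : Sg.V, Sg.val v ^ 2 * (n / Sg.deg v) := by
  classical
  have li := basis_li k Sg n pick hn hcompat hpick
  have sp := span_top k Sg n pick hn hcompat hpick
  refine ⟨li, sp, ?_, ?_, ?_, ?_⟩
  · intro p
    rw [show Sg.vtx p.1.1 = Sg.vtx p.1.2.1 from pvtx Sg n p]
    exact Submodule.mem_map_of_mem (pathWord_mem_FAcomp' k Sg (pvtx Sg n p) p.1.2.2)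
  · intro f
    exact Submodule.mem_map_of_mem (cyc_mem_FAcomp k Sg hcompat (pick f))
  · exact Module.Finite.of_basis (Module.Basis.mk li (le_of_eq sp.symm))
  · rw [Module.finrank_eq_card_basis (Module.Basis.mk li (le_of_eq sp.symm))]
    rw [Fintype.card_sum, Fintype.card_sum]
    have h1 := card_pathIdx Sg n hn hcompat
    have h2 := card_H_eq Sg
    have h3 : ∑ v : Sg.V, Sg.val v ^ 2 * (n / Sg.deg v)
        = ∑ v : Sg.V, Sg.val v * Sg.val v * (n / Sg.deg v) :=
      Finset.sum_congr rfl (fun v _ => by rw [pow_two])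
    rw [h3]
    omega
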